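/- Let (A,·,α,β) be a BiHom-associative superalgebra with α,β bijective and let R be a Rota-Baxter operator of weight −1 on it, i.e. R(x)·R(y) = R(R(x)·y + x·R(y) − x·y) for all homogeneous x,y. Define the even product x∘y = R(x)·y − (−1)^{|x||y|}(α⁻¹β(y))·R(αβ⁻¹(x)) − x·y. Then (A,∘,α,β) is a BiHom-pre-Lie superalgebra. -/

import Mathlib

/-!
STATEMENT 7: If `(A,·,α,β)` is a BiHom-associative superalgebra with `α, β` bijective and
`R` is a Rota-Baxter operator of weight `−1` on it, then
`x∘y = R(x)·y − (−1)^{|x||y|}(α⁻¹β(y))·R(αβ⁻¹(x)) − x·y` makes `(A,∘,α,β)` a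
BiHom-pre-Lie superalgebra.
-/
set_option maxHeartbeats 1000000 in
theorem aux7 {K : Type} [Field K] {A : Type} [AddCommGroup A] [Module K A]
    (μ : A →ₗ[K] A →ₗ[K] A) (α β : A ≃ₗ[K] A)
    (hcomm : ∀ a, α (β a) = β (α a))
    (hαm : ∀ a b : A, α (μ a b) = μ (α a) (α b))
    (hβm : ∀ a b : A, β (μ a b) = μ (β a) (β b))
    (hass : ∀ a b c : A, μ (α a) (μ b c) = μ (μ a b) (β c))
    (R : A →ₗ[K] A) (hRα : ∀ a, R (α a) = α (R a)) (hRβ : ∀ a, R (β a) = β (R a))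
    (P : A → Prop)
    (hPm : ∀ a b, P a → P b → P (μ a b))
    (hPR : ∀ a, P a → P (R a))
    (hPa : ∀ a, P a → P (α a)) (hPas : ∀ a, P a → P (α.symm a))
    (hPb : ∀ a, P a → P (β a)) (hPbs : ∀ a, P a → P (β.symm a))
    (hRB : ∀ a b, P a → P b → μ (R a) (R b) = R (μ (R a) b + μ a (R b) - μ a b))
    (x y z : A) (px : P x) (py : P y) (pz : P z) (ea eb ec : K) :
    ((-1 : K)) • (μ (R (α (β (x)))) (μ (R (α (y))) (z)))
      + ((1 : K)) • (μ (R (α (β (x)))) (μ (α (y)) (z)))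
      + ((1 : K) * ec) • (μ (R (α (β (x)))) (μ (α.symm (β (z))) (R (α (α (β.symm (y)))))))
      + ((1 : K)) • (μ (R (μ (R (β (x))) (α (y)))) (β (z)))
      + ((-1 : K)) • (μ (R (μ (β (x)) (α (y)))) (β (z)))
      + ((-1 : K) * ea) • (μ (R (μ (β (y)) (R (α (x))))) (β (z)))
      + ((1 : K)) • (μ (α (β (x))) (μ (R (α (y))) (z)))
      + ((-1 : K)) • (μ (α (β (x))) (μ (α (y)) (z)))
      + ((-1 : K) * ec) • (μ (α (β (x))) (μ (α.symm (β (z))) (R (α (α (β.symm (y)))))))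
      + ((-1 : K) * eb * ec) • (μ (α.symm (β (β (z)))) (R (μ (R (α (x))) (α (α (β.symm (y)))))))
      + ((1 : K) * eb * ec) • (μ (α.symm (β (β (z)))) (R (μ (α (x)) (α (α (β.symm (y)))))))
      + ((1 : K) * ea * eb * ec) • (μ (α.symm (β (β (z)))) (R (μ (α (y)) (R (α (α (β.symm (x))))))))
      + ((-1 : K)) • (μ (μ (R (β (x))) (α (y))) (β (z)))
      + ((1 : K) * ea * eb) • (μ (μ (R (β (y))) (α.symm (β (z)))) (R (α (α (x)))))
      + ((1 : K)) • (μ (μ (β (x)) (α (y))) (β (z)))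
      + ((1 : K) * ea) • (μ (μ (β (y)) (R (α (x)))) (β (z)))
      + ((-1 : K) * ea * eb) • (μ (μ (β (y)) (α.symm (β (z)))) (R (α (α (x)))))
      + ((-1 : K) * ea * eb * ec) • (μ (μ (α.symm (α.symm (β (β (z))))) (R (α (y)))) (R (α (α (x)))))
    = ((-1 : K)) • (μ (R (μ (β (x)) (R (α (y))))) (β (z)))
      + ((-1 : K) * ea) • (μ (R (μ (β (y)) (R (α (x))))) (β (z)))
      + ((-1 : K) * eb * ec) • (μ (α.symm (β (β (z)))) (R (μ (R (α (x))) (α (α (β.symm (y)))))))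
      + ((-1 : K) * ea * eb * ec) • (μ (α.symm (β (β (z)))) (R (μ (R (α (y))) (α (α (β.symm (x)))))))
      + ((1 : K) * eb * ec) • (μ (α.symm (β (β (z)))) (R (μ (α (x)) (α (α (β.symm (y)))))))
      + ((1 : K) * ea * eb * ec) • (μ (α.symm (β (β (z)))) (R (μ (α (y)) (α (α (β.symm (x)))))))
      + ((1 : K) * ec) • (μ (μ (R (β (x))) (α.symm (β (z)))) (R (α (α (y)))))
      + ((1 : K) * ea * eb) • (μ (μ (R (β (y))) (α.symm (β (z)))) (R (α (α (x)))))
      + ((1 : K)) • (μ (μ (β (x)) (R (α (y)))) (β (z)))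
      + ((-1 : K) * ec) • (μ (μ (β (x)) (α.symm (β (z)))) (R (α (α (y)))))
      + ((1 : K) * ea) • (μ (μ (β (y)) (R (α (x)))) (β (z)))
      + ((-1 : K) * ea * eb) • (μ (μ (β (y)) (α.symm (β (z)))) (R (α (α (x))))) := by

  have hba : ∀ a : A, β (α a) = α (β a) := fun a => (hcomm a).symm
  have hbas : ∀ a : A, β (α.symm a) = α.symm (β a) := fun a =>
    α.injective (by rw [hcomm, LinearEquiv.apply_symm_apply, LinearEquiv.apply_symm_apply])
  have hbsa : ∀ a : A, β.symm (α a) = α (β.symm a) := fun a =>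
    β.injective (by rw [LinearEquiv.apply_symm_apply, ← hcomm, LinearEquiv.apply_symm_apply])
  have hbsas : ∀ a : A, β.symm (α.symm a) = α.symm (β.symm a) := fun a =>
    α.injective (by rw [← hbsa, LinearEquiv.apply_symm_apply, LinearEquiv.apply_symm_apply])
  have hAsm : ∀ a b : A, α.symm (μ a b) = μ (α.symm a) (α.symm b) := fun a b =>
    α.injective (by rw [LinearEquiv.apply_symm_apply, hαm, LinearEquiv.apply_symm_apply,
      LinearEquiv.apply_symm_apply])
  have hBsm : ∀ a b : A, β.symm (μ a b) = μ (β.symm a) (β.symm b) := fun a b =>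
    β.injective (by rw [LinearEquiv.apply_symm_apply, hβm, LinearEquiv.apply_symm_apply,
      LinearEquiv.apply_symm_apply])
  have hAR : ∀ a : A, α (R a) = R (α a) := fun a => (hRα a).symm
  have hBR : ∀ a : A, β (R a) = β (R a) := fun a => rfl
  have hBR : ∀ a : A, β (R a) = R (β a) := fun a => (hRβ a).symm
  have hAsR : ∀ a : A, α.symm (R a) = R (α.symm a) := fun a =>
    α.injective (by rw [LinearEquiv.apply_symm_apply, ← hRα, LinearEquiv.apply_symm_apply])
  have hBsR : ∀ a : A, β.symm (R a) = R (β.symm a) := fun a =>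
    β.injective (by rw [LinearEquiv.apply_symm_apply, ← hRβ, LinearEquiv.apply_symm_apply])

  have e0 : (μ (R (α (β (x)))) (μ (R (α (y))) (z))) = (μ (μ (R (β (x))) (R (α (y)))) (β (z))) :=
    by simpa only [map_add, map_sub, map_smul, LinearMap.add_apply, LinearMap.sub_apply, LinearMap.smul_apply, hαm, hβm, hAsm, hBsm, hAR, hBR, hAsR, hBsR, hba, hbas, hbsa, hbsas, LinearEquiv.apply_symm_apply, LinearEquiv.symm_apply_apply] using (hass (R (β (x))) (R (α (y))) (z))
  have e1 : (μ (R (α (β (x)))) (μ (α (y)) (z))) = (μ (μ (R (β (x))) (α (y))) (β (z))) :=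
    by simpa only [map_add, map_sub, map_smul, LinearMap.add_apply, LinearMap.sub_apply, LinearMap.smul_apply, hαm, hβm, hAsm, hBsm, hAR, hBR, hAsR, hBsR, hba, hbas, hbsa, hbsas, LinearEquiv.apply_symm_apply, LinearEquiv.symm_apply_apply] using (hass (R (β (x))) (α (y)) (z))
  have e2 : (μ (R (α (β (x)))) (μ (α.symm (β (z))) (R (α (α (β.symm (y))))))) = (μ (μ (R (β (x))) (α.symm (β (z)))) (R (α (α (y))))) :=
    by simpa only [map_add, map_sub, map_smul, LinearMap.add_apply, LinearMap.sub_apply, LinearMap.smul_apply, hαm, hβm, hAsm, hBsm, hAR, hBR, hAsR, hBsR, hba, hbas, hbsa, hbsas, LinearEquiv.apply_symm_apply, LinearEquiv.symm_apply_apply] using (hass (R (β (x))) (α.symm (β (z))) (R (α (α (β.symm (y))))))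
  have e3 : (μ (α (β (x))) (μ (R (α (y))) (z))) = (μ (μ (β (x)) (R (α (y)))) (β (z))) :=
    by simpa only [map_add, map_sub, map_smul, LinearMap.add_apply, LinearMap.sub_apply, LinearMap.smul_apply, hαm, hβm, hAsm, hBsm, hAR, hBR, hAsR, hBsR, hba, hbas, hbsa, hbsas, LinearEquiv.apply_symm_apply, LinearEquiv.symm_apply_apply] using (hass (β (x)) (R (α (y))) (z))
  have e4 : (μ (α (β (x))) (μ (α (y)) (z))) = (μ (μ (β (x)) (α (y))) (β (z))) :=
    by simpa only [map_add, map_sub, map_smul, LinearMap.add_apply, LinearMap.sub_apply, LinearMap.smul_apply, hαm, hβm, hAsm, hBsm, hAR, hBR, hAsR, hBsR, hba, hbas, hbsa, hbsas, LinearEquiv.apply_symm_apply, LinearEquiv.symm_apply_apply] using (hass (β (x)) (α (y)) (z))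
  have e5 : (μ (α (β (x))) (μ (α.symm (β (z))) (R (α (α (β.symm (y))))))) = (μ (μ (β (x)) (α.symm (β (z)))) (R (α (α (y))))) :=
    by simpa only [map_add, map_sub, map_smul, LinearMap.add_apply, LinearMap.sub_apply, LinearMap.smul_apply, hαm, hβm, hAsm, hBsm, hAR, hBR, hAsR, hBsR, hba, hbas, hbsa, hbsas, LinearEquiv.apply_symm_apply, LinearEquiv.symm_apply_apply] using (hass (β (x)) (α.symm (β (z))) (R (α (α (β.symm (y))))))
  have e6 : (μ (μ (R (β (x))) (R (α (y)))) (β (z))) = (μ (R (μ (R (β (x))) (α (y)))) (β (z))) + (μ (R (μ (β (x)) (R (α (y))))) (β (z))) - (μ (R (μ (β (x)) (α (y)))) (β (z))) :=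
    by simpa only [map_add, map_sub, map_smul, LinearMap.add_apply, LinearMap.sub_apply, LinearMap.smul_apply, hαm, hβm, hAsm, hBsm, hAR, hBR, hAsR, hBsR, hba, hbas, hbsa, hbsas, LinearEquiv.apply_symm_apply, LinearEquiv.symm_apply_apply] using congrArg (fun t => μ (t) (β (z))) (hRB (β (x)) (α (y)) (hPb _ px) (hPa _ py))
  have e7 : (μ (α.symm (β (β (z)))) (μ (R (α (y))) (R (α (α (β.symm (x))))))) = (μ (μ (α.symm (α.symm (β (β (z))))) (R (α (y)))) (R (α (α (x))))) :=
    by simpa only [map_add, map_sub, map_smul, LinearMap.add_apply, LinearMap.sub_apply, LinearMap.smul_apply, hαm, hβm, hAsm, hBsm, hAR, hBR, hAsR, hBsR, hba, hbas, hbsa, hbsas, LinearEquiv.apply_symm_apply, LinearEquiv.symm_apply_apply] using (hass (α.symm (α.symm (β (β (z))))) (R (α (y))) (R (α (α (β.symm (x))))))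
  have e8 : (μ (α.symm (β (β (z)))) (μ (R (α (y))) (R (α (α (β.symm (x))))))) = (μ (α.symm (β (β (z)))) (R (μ (R (α (y))) (α (α (β.symm (x))))))) + (μ (α.symm (β (β (z)))) (R (μ (α (y)) (R (α (α (β.symm (x)))))))) - (μ (α.symm (β (β (z)))) (R (μ (α (y)) (α (α (β.symm (x))))))) :=
    by simpa only [map_add, map_sub, map_smul, LinearMap.add_apply, LinearMap.sub_apply, LinearMap.smul_apply, hαm, hβm, hAsm, hBsm, hAR, hBR, hAsR, hBsR, hba, hbas, hbsa, hbsas, LinearEquiv.apply_symm_apply, LinearEquiv.symm_apply_apply] using congrArg (fun t => μ (α.symm (β (β (z)))) (t)) (hRB (α (y)) (α (α (β.symm (x)))) (hPa _ py) (hPa _ (hPa _ (hPbs _ px))))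
  linear_combination (norm := module) ((-1 : K)) • e0 + ((1 : K)) • e1 + ((1 : K) * ec) • e2 + ((1 : K)) • e3 + ((-1 : K)) • e4 + ((-1 : K) * ec) • e5 + ((-1 : K)) • e6 + ((1 : K) * ea * eb * ec) • e7 + ((-1 : K) * ea * eb * ec) • e8


set_option maxHeartbeats 4000000 in
theorem statement7
    (K : Type) [Field K] [CharZero K]
    (A : Type) [AddCommGroup A] [Module K A]
    (𝒜 : ZMod 2 → Submodule K A)
    (hA : DirectSum.IsInternal 𝒜)
    (μ : A →ₗ[K] A →ₗ[K] A)
    (α β : A ≃ₗ[K] A)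
    (hcomm : ∀ a, α (β a) = β (α a))
    (hαe : ∀ i : ZMod 2, ∀ a ∈ 𝒜 i, α a ∈ 𝒜 i)
    (hβe : ∀ i : ZMod 2, ∀ a ∈ 𝒜 i, β a ∈ 𝒜 i)
    (hμe : ∀ i j : ZMod 2, ∀ a ∈ 𝒜 i, ∀ b ∈ 𝒜 j, μ a b ∈ 𝒜 (i + j))
    (hαm : ∀ a b : A, α (μ a b) = μ (α a) (α b))
    (hβm : ∀ a b : A, β (μ a b) = μ (β a) (β b))
    (hass : ∀ a b c : A, μ (α a) (μ b c) = μ (μ a b) (β c))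
    -- R is a Rota-Baxter operator of weight −1
    (R : A →ₗ[K] A)
    (hRe : ∀ i : ZMod 2, ∀ a ∈ 𝒜 i, R a ∈ 𝒜 i)
    (hRα : ∀ a, R (α a) = α (R a))
    (hRβ : ∀ a, R (β a) = β (R a))
    (hRB : ∀ i j : ZMod 2, ∀ x ∈ 𝒜 i, ∀ y ∈ 𝒜 j,
      μ (R x) (R y) = R (μ (R x) y + μ x (R y) - μ x y))
    -- the product ∘
    (m : ZMod 2 → ZMod 2 → A → A → A)
    (hm : ∀ i j x y, m i j x y
      = μ (R x) y
        - ((-1 : K) ^ (i.val * j.val)) • μ (α.symm (β y)) (R (α (β.symm x)))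
        - μ x y) :
    -- `(A,∘,α,β)` is a BiHom-pre-Lie superalgebra:
    (∀ i j : ZMod 2, ∀ x ∈ 𝒜 i, ∀ y ∈ 𝒜 j, m i j x y ∈ 𝒜 (i + j))
    ∧ (∀ i j : ZMod 2, ∀ x ∈ 𝒜 i, ∀ y ∈ 𝒜 j, α (m i j x y) = m i j (α x) (α y))
    ∧ (∀ i j : ZMod 2, ∀ x ∈ 𝒜 i, ∀ y ∈ 𝒜 j, β (m i j x y) = m i j (β x) (β y))
    ∧ (∀ i j k : ZMod 2, ∀ x ∈ 𝒜 i, ∀ y ∈ 𝒜 j, ∀ z ∈ 𝒜 k,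
        m (i + j) k (m i j (β x) (α y)) (β z)
          - m i (j + k) (α (β x)) (m j k (α y) z)
          = ((-1 : K) ^ (i.val * j.val)) •
              (m (j + i) k (m j i (β y) (α x)) (β z)
                - m j (i + k) (α (β y)) (m i k (α x) z))) := by
  have h2 : ∀ n : ZMod 2, n = 0 ∨ n = 1 := by decide
  have hsup : ∀ v : A, ∃ b0 ∈ 𝒜 0, ∃ b1 ∈ 𝒜 1, v = b0 + b1 := by
    intro v
    have hv : v ∈ (⨆ i, 𝒜 i : Submodule K A) := by
      rw [hA.submodule_iSup_eq_top]; exact Submodule.mem_top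
    have hle : (⨆ i, 𝒜 i : Submodule K A) ≤ 𝒜 0 ⊔ 𝒜 1 := by
      refine iSup_le fun i => ?_
      rcases h2 i with rfl | rfl
      · exact le_sup_left
      · exact le_sup_right
    rcases Submodule.mem_sup.mp (hle hv) with ⟨b0, h0, b1, h1, hs⟩
    exact ⟨b0, h0, b1, h1, hs.symm⟩
  have hdisj : ∀ a : A, a ∈ 𝒜 0 → a ∈ 𝒜 1 → a = 0 := by
    intro a h0 h1
    have hd : Disjoint (𝒜 0) (𝒜 1) :=
      hA.submodule_iSupIndep.pairwiseDisjoint (by decide)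
    exact (Submodule.disjoint_def.mp hd) a h0 h1
  have hsub : ∀ (f : A ≃ₗ[K] A), (∀ i : ZMod 2, ∀ a ∈ 𝒜 i, f a ∈ 𝒜 i) →
      ∀ i : ZMod 2, ∀ a ∈ 𝒜 i, f.symm a ∈ 𝒜 i := by
    intro f hf i a ha
    obtain ⟨b0, h0, b1, h1, hs⟩ := hsup (f.symm a)
    have hfa : a = f b0 + f b1 := by rw [← map_add, ← hs, f.apply_symm_apply]
    rcases h2 i with rfl | rfl
    · have he : f b1 = a - f b0 := by rw [hfa]; abel
      have z1 : b1 = 0 := by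
        apply f.injective
        rw [map_zero, hdisj (f b1) (he ▸ sub_mem ha (hf 0 b0 h0)) (hf 1 b1 h1)]
      rw [hs, z1, add_zero]; exact h0
    · have he : f b0 = a - f b1 := by rw [hfa]; abel
      have z0 : b0 = 0 := by
        apply f.injective
        rw [map_zero, hdisj (f b0) (hf 0 b0 h0) (he ▸ sub_mem ha (hf 1 b1 h1))]
      rw [hs, z0, zero_add]; exact h1

  have hba : ∀ a : A, β (α a) = α (β a) := fun a => (hcomm a).symm
  have hbas : ∀ a : A, β (α.symm a) = α.symm (β a) := fun a =>
    α.injective (by rw [hcomm, LinearEquiv.apply_symm_apply, LinearEquiv.apply_symm_apply])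
  have hbsa : ∀ a : A, β.symm (α a) = α (β.symm a) := fun a =>
    β.injective (by rw [LinearEquiv.apply_symm_apply, ← hcomm, LinearEquiv.apply_symm_apply])
  have hbsas : ∀ a : A, β.symm (α.symm a) = α.symm (β.symm a) := fun a =>
    α.injective (by rw [← hbsa, LinearEquiv.apply_symm_apply, LinearEquiv.apply_symm_apply])
  have hAsm : ∀ a b : A, α.symm (μ a b) = μ (α.symm a) (α.symm b) := fun a b =>
    α.injective (by rw [LinearEquiv.apply_symm_apply, hαm, LinearEquiv.apply_symm_apply,
      LinearEquiv.apply_symm_apply])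
  have hBsm : ∀ a b : A, β.symm (μ a b) = μ (β.symm a) (β.symm b) := fun a b =>
    β.injective (by rw [LinearEquiv.apply_symm_apply, hβm, LinearEquiv.apply_symm_apply,
      LinearEquiv.apply_symm_apply])
  have hAR : ∀ a : A, α (R a) = R (α a) := fun a => (hRα a).symm
  have hBR : ∀ a : A, β (R a) = β (R a) := fun a => rfl
  have hBR : ∀ a : A, β (R a) = R (β a) := fun a => (hRβ a).symm
  have hAsR : ∀ a : A, α.symm (R a) = R (α.symm a) := fun a =>
    α.injective (by rw [LinearEquiv.apply_symm_apply, ← hRα, LinearEquiv.apply_symm_apply])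
  have hBsR : ∀ a : A, β.symm (R a) = R (β.symm a) := fun a =>
    β.injective (by rw [LinearEquiv.apply_symm_apply, ← hRβ, LinearEquiv.apply_symm_apply])

  refine ⟨?_, ?_, ?_, ?_⟩
  · intro i j x hx y hy
    rw [hm]
    have h1 : μ (R x) y ∈ 𝒜 (i + j) := hμe i j _ (hRe i x hx) _ hy
    have hmem : μ (α.symm (β y)) (R (α (β.symm x))) ∈ 𝒜 (j + i) :=
      hμe j i _ (hsub α hαe j _ (hβe j y hy)) _
        (hRe i _ (hαe i _ (hsub β hβe i x hx)))
    rw [add_comm j i] at hmem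
    exact sub_mem (sub_mem h1 (Submodule.smul_mem _ _ hmem)) (hμe i j x hx y hy)
  · intro i j x hx y hy
    simp only [hm, map_add, map_sub, map_smul, LinearMap.add_apply, LinearMap.sub_apply, LinearMap.smul_apply, hαm, hβm, hAsm, hBsm, hAR, hBR, hAsR, hBsR, hba, hbas, hbsa, hbsas, LinearEquiv.apply_symm_apply, LinearEquiv.symm_apply_apply]
    all_goals module
  · intro i j x hx y hy
    simp only [hm, map_add, map_sub, map_smul, LinearMap.add_apply, LinearMap.sub_apply, LinearMap.smul_apply, hαm, hβm, hAsm, hBsm, hAR, hBR, hAsR, hBsR, hba, hbas, hbsa, hbsas, LinearEquiv.apply_symm_apply, LinearEquiv.symm_apply_apply]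
    all_goals module
  · intro i j k x hx y hy z hz
    have px : ∃ n : ZMod 2, x ∈ 𝒜 n := ⟨i, hx⟩
    have py : ∃ n : ZMod 2, y ∈ 𝒜 n := ⟨j, hy⟩
    have pz : ∃ n : ZMod 2, z ∈ 𝒜 n := ⟨k, hz⟩
    have hPm' : ∀ a b : A, (∃ n : ZMod 2, a ∈ 𝒜 n) → (∃ n : ZMod 2, b ∈ 𝒜 n) →
        (∃ n : ZMod 2, μ a b ∈ 𝒜 n) := by
      rintro a b ⟨n, ha⟩ ⟨n', hb⟩; exact ⟨n + n', hμe n n' a ha b hb⟩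
    have hPR' : ∀ a : A, (∃ n : ZMod 2, a ∈ 𝒜 n) → (∃ n : ZMod 2, R a ∈ 𝒜 n) := by
      rintro a ⟨n, ha⟩; exact ⟨n, hRe n a ha⟩
    have hPa' : ∀ a : A, (∃ n : ZMod 2, a ∈ 𝒜 n) → (∃ n : ZMod 2, α a ∈ 𝒜 n) := by
      rintro a ⟨n, ha⟩; exact ⟨n, hαe n a ha⟩
    have hPas' : ∀ a : A, (∃ n : ZMod 2, a ∈ 𝒜 n) → (∃ n : ZMod 2, α.symm a ∈ 𝒜 n) := by
      rintro a ⟨n, ha⟩; exact ⟨n, hsub α hαe n a ha⟩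
    have hPb' : ∀ a : A, (∃ n : ZMod 2, a ∈ 𝒜 n) → (∃ n : ZMod 2, β a ∈ 𝒜 n) := by
      rintro a ⟨n, ha⟩; exact ⟨n, hβe n a ha⟩
    have hPbs' : ∀ a : A, (∃ n : ZMod 2, a ∈ 𝒜 n) → (∃ n : ZMod 2, β.symm a ∈ 𝒜 n) := by
      rintro a ⟨n, ha⟩; exact ⟨n, hsub β hβe n a ha⟩
    have hRB' : ∀ a b : A, (∃ n : ZMod 2, a ∈ 𝒜 n) → (∃ n : ZMod 2, b ∈ 𝒜 n) →
        μ (R a) (R b) = R (μ (R a) b + μ a (R b) - μ a b) := by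
      rintro a b ⟨n, ha⟩ ⟨n', hb⟩; exact hRB n n' a ha b hb
    have AUX := aux7 μ α β hcomm hαm hβm hass R hRα hRβ
      (fun a => ∃ n : ZMod 2, a ∈ 𝒜 n) hPm' hPR' hPa' hPas' hPb' hPbs' hRB'
    have v0 : ((0 : ZMod 2)).val = 0 := rfl
    have v1 : ((1 : ZMod 2)).val = 1 := rfl
    have a00 : ((0 : ZMod 2) + 0) = 0 := by decide
    have a01 : ((0 : ZMod 2) + 1) = 1 := by decide
    have a10 : ((1 : ZMod 2) + 0) = 1 := by decide
    have a11 : ((1 : ZMod 2) + 1) = 0 := by decide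
    rcases h2 i with rfl | rfl <;> rcases h2 j with rfl | rfl <;> rcases h2 k with rfl | rfl
    · simp only [hm]
      simp only [a00, a01, a10, a11, v0, v1, Nat.one_mul, Nat.mul_one, Nat.zero_mul,
        Nat.mul_zero, pow_zero, pow_one]
      simp only [map_add, map_sub, map_smul, LinearMap.add_apply, LinearMap.sub_apply, LinearMap.smul_apply, hαm, hβm, hAsm, hBsm, hAR, hBR, hAsR, hBsR, hba, hbas, hbsa, hbsas, LinearEquiv.apply_symm_apply, LinearEquiv.symm_apply_apply]
      linear_combination (norm := module)
        AUX x y z px py pz (1 : K) (1 : K) (1 : K) - (1 : K) • AUX y x z py px pz (1 : K) (1 : K) (1 : K)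
    · simp only [hm]
      simp only [a00, a01, a10, a11, v0, v1, Nat.one_mul, Nat.mul_one, Nat.zero_mul,
        Nat.mul_zero, pow_zero, pow_one]
      simp only [map_add, map_sub, map_smul, LinearMap.add_apply, LinearMap.sub_apply, LinearMap.smul_apply, hαm, hβm, hAsm, hBsm, hAR, hBR, hAsR, hBsR, hba, hbas, hbsa, hbsas, LinearEquiv.apply_symm_apply, LinearEquiv.symm_apply_apply]
      linear_combination (norm := module)
        AUX x y z px py pz (1 : K) (1 : K) (1 : K) - (1 : K) • AUX y x z py px pz (1 : K) (1 : K) (1 : K)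
    · simp only [hm]
      simp only [a00, a01, a10, a11, v0, v1, Nat.one_mul, Nat.mul_one, Nat.zero_mul,
        Nat.mul_zero, pow_zero, pow_one]
      simp only [map_add, map_sub, map_smul, LinearMap.add_apply, LinearMap.sub_apply, LinearMap.smul_apply, hαm, hβm, hAsm, hBsm, hAR, hBR, hAsR, hBsR, hba, hbas, hbsa, hbsas, LinearEquiv.apply_symm_apply, LinearEquiv.symm_apply_apply]
      linear_combination (norm := module)
        AUX x y z px py pz (1 : K) (1 : K) (1 : K) - (1 : K) • AUX y x z py px pz (1 : K) (1 : K) (1 : K)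
    · simp only [hm]
      simp only [a00, a01, a10, a11, v0, v1, Nat.one_mul, Nat.mul_one, Nat.zero_mul,
        Nat.mul_zero, pow_zero, pow_one]
      simp only [map_add, map_sub, map_smul, LinearMap.add_apply, LinearMap.sub_apply, LinearMap.smul_apply, hαm, hβm, hAsm, hBsm, hAR, hBR, hAsR, hBsR, hba, hbas, hbsa, hbsas, LinearEquiv.apply_symm_apply, LinearEquiv.symm_apply_apply]
      linear_combination (norm := module)
        AUX x y z px py pz (1 : K) (1 : K) (-1 : K) - (1 : K) • AUX y x z py px pz (1 : K) (-1 : K) (1 : K)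
    · simp only [hm]
      simp only [a00, a01, a10, a11, v0, v1, Nat.one_mul, Nat.mul_one, Nat.zero_mul,
        Nat.mul_zero, pow_zero, pow_one]
      simp only [map_add, map_sub, map_smul, LinearMap.add_apply, LinearMap.sub_apply, LinearMap.smul_apply, hαm, hβm, hAsm, hBsm, hAR, hBR, hAsR, hBsR, hba, hbas, hbsa, hbsas, LinearEquiv.apply_symm_apply, LinearEquiv.symm_apply_apply]
      linear_combination (norm := module)
        AUX x y z px py pz (1 : K) (1 : K) (1 : K) - (1 : K) • AUX y x z py px pz (1 : K) (1 : K) (1 : K)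
    · simp only [hm]
      simp only [a00, a01, a10, a11, v0, v1, Nat.one_mul, Nat.mul_one, Nat.zero_mul,
        Nat.mul_zero, pow_zero, pow_one]
      simp only [map_add, map_sub, map_smul, LinearMap.add_apply, LinearMap.sub_apply, LinearMap.smul_apply, hαm, hβm, hAsm, hBsm, hAR, hBR, hAsR, hBsR, hba, hbas, hbsa, hbsas, LinearEquiv.apply_symm_apply, LinearEquiv.symm_apply_apply]
      linear_combination (norm := module)
        AUX x y z px py pz (1 : K) (-1 : K) (1 : K) - (1 : K) • AUX y x z py px pz (1 : K) (1 : K) (-1 : K)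
    · simp only [hm]
      simp only [a00, a01, a10, a11, v0, v1, Nat.one_mul, Nat.mul_one, Nat.zero_mul,
        Nat.mul_zero, pow_zero, pow_one]
      simp only [map_add, map_sub, map_smul, LinearMap.add_apply, LinearMap.sub_apply, LinearMap.smul_apply, hαm, hβm, hAsm, hBsm, hAR, hBR, hAsR, hBsR, hba, hbas, hbsa, hbsas, LinearEquiv.apply_symm_apply, LinearEquiv.symm_apply_apply]
      linear_combination (norm := module)
        AUX x y z px py pz (-1 : K) (1 : K) (1 : K) - (-1 : K) • AUX y x z py px pz (-1 : K) (1 : K) (1 : K)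
    · simp only [hm]
      simp only [a00, a01, a10, a11, v0, v1, Nat.one_mul, Nat.mul_one, Nat.zero_mul,
        Nat.mul_zero, pow_zero, pow_one]
      simp only [map_add, map_sub, map_smul, LinearMap.add_apply, LinearMap.sub_apply, LinearMap.smul_apply, hαm, hβm, hAsm, hBsm, hAR, hBR, hAsR, hBsR, hba, hbas, hbsa, hbsas, LinearEquiv.apply_symm_apply, LinearEquiv.symm_apply_apply]
      linear_combination (norm := module)
        AUX x y z px py pz (-1 : K) (-1 : K) (-1 : K) - (-1 : K) • AUX y x z py px pz (-1 : K) (-1 : K) (-1 : K)
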